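/- Define h_n(x) = (1/n)·Mish(nx) where Mish(y) = y·tanh(log(1 + exp(y))). Then for all x ∈ ℝ and n ∈ ℕ, |h_n(x) − ReLU(x)| ≤ 1/n. In particular, for x ≥ 0, |h_n(x) − x| = 2x/((1+exp(nx))² + 1) ≤ 1/n, and for x < 0, |h_n(x)| ≤ (−x)·exp(nx) ≤ 1/(en). -/

import Mathlib

lemma tanh_log_aux (u : ℝ) :
    Real.tanh (Real.log (1 + Real.exp u)) =
      ((1 + Real.exp u) ^ 2 - 1) / ((1 + Real.exp u) ^ 2 + 1) := by
  have hA : (0 : ℝ) < 1 + Real.exp u := by positivity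
  rw [Real.tanh_eq_sinh_div_cosh, Real.sinh_eq, Real.cosh_eq, Real.exp_log hA,
    Real.exp_neg, Real.exp_log hA]
  have h1 : (1 + Real.exp u) ^ 2 + 1 > 0 := by positivity
  field_simp

lemma neg_mul_exp_le (c : ℝ) (hc : 0 < c) (x : ℝ) (hx : x < 0) :
    (-x) * Real.exp (c * x) ≤ 1 / (Real.exp 1 * c) := by
  set t : ℝ := -(c * x) with ht
  have htpos : 0 < t := by
    have := mul_pos hc (neg_pos.mpr hx); simpa [ht] using by nlinarith
  have h1 : t ≤ Real.exp (t - 1) := by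
    have := Real.add_one_le_exp (t - 1); linarith
  have h2 : Real.exp (t - 1) = Real.exp t / Real.exp 1 := by
    rw [Real.exp_sub]
  have he : 0 < Real.exp t := Real.exp_pos t
  have h3 : t * Real.exp (-t) ≤ 1 / Real.exp 1 := by
    rw [h2] at h1
    have h1' : t * Real.exp 1 ≤ Real.exp t := (le_div_iff₀ (Real.exp_pos 1)).mp h1
    have hrw : t * Real.exp (-t) = t / Real.exp t := by rw [Real.exp_neg]; ring
    rw [hrw, div_le_div_iff₀ he (Real.exp_pos 1)]
    linarith
  have hxe : (-x) * Real.exp (c * x) = (t / c) * Real.exp (-t) := by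
    rw [ht, neg_neg, neg_div, mul_div_cancel_left₀ _ hc.ne']
  rw [hxe]
  rw [div_mul_eq_mul_div, div_le_div_iff₀ hc (by positivity)]
  have h4 : t * Real.exp (-t) * Real.exp 1 ≤ 1 := by
    have := (le_div_iff₀ (Real.exp_pos 1)).mp h3
    linarith
  nlinarith [mul_le_mul_of_nonneg_right h4 hc.le]

theorem stmt11 (n : ℕ) (hn : 0 < n) (x : ℝ) :
    |(1 / (n : ℝ)) * ((n : ℝ) * x * Real.tanh (Real.log (1 + Real.exp ((n : ℝ) * x)))) -
        max x 0| ≤ 1 / (n : ℝ) ∧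
    (0 ≤ x →
      |(1 / (n : ℝ)) * ((n : ℝ) * x * Real.tanh (Real.log (1 + Real.exp ((n : ℝ) * x)))) - x| =
          2 * x / ((1 + Real.exp ((n : ℝ) * x)) ^ 2 + 1) ∧
      2 * x / ((1 + Real.exp ((n : ℝ) * x)) ^ 2 + 1) ≤ 1 / (n : ℝ)) ∧
    (x < 0 →
      |(1 / (n : ℝ)) * ((n : ℝ) * x * Real.tanh (Real.log (1 + Real.exp ((n : ℝ) * x))))| ≤
          (-x) * Real.exp ((n : ℝ) * x) ∧
      (-x) * Real.exp ((n : ℝ) * x) ≤ 1 / (Real.exp 1 * n)) := by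
  have hn0 : (0 : ℝ) < n := by exact_mod_cast hn
  set E : ℝ := Real.exp ((n : ℝ) * x) with hE
  have hEpos : 0 < E := Real.exp_pos _
  have hD : (0 : ℝ) < (1 + E) ^ 2 + 1 := by positivity
  have hT : Real.tanh (Real.log (1 + E)) = ((1 + E) ^ 2 - 1) / ((1 + E) ^ 2 + 1) :=
    tanh_log_aux _
  have hsimp : (1 / (n : ℝ)) * ((n : ℝ) * x * Real.tanh (Real.log (1 + E))) =
      x * (((1 + E) ^ 2 - 1) / ((1 + E) ^ 2 + 1)) := by
    rw [hT]; field_simp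
  -- part for x ≥ 0
  have hpos : 0 ≤ x →
      |(1 / (n : ℝ)) * ((n : ℝ) * x * Real.tanh (Real.log (1 + E))) - x| =
        2 * x / ((1 + E) ^ 2 + 1) ∧
      2 * x / ((1 + E) ^ 2 + 1) ≤ 1 / (n : ℝ) := by
    intro hx
    have heq : (1 / (n : ℝ)) * ((n : ℝ) * x * Real.tanh (Real.log (1 + E))) - x =
        -(2 * x / ((1 + E) ^ 2 + 1)) := by
      rw [hsimp]; field_simp; ring
    constructor
    · rw [heq, abs_neg, abs_of_nonneg (by positivity)]
    · rw [div_le_div_iff₀ hD hn0]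
      have hgey : 1 + (n : ℝ) * x ≤ E := by
        rw [hE]; linarith [Real.add_one_le_exp ((n : ℝ) * x)]
      nlinarith [mul_nonneg (mul_nonneg hn0.le hx) (mul_nonneg hn0.le hx),
        mul_nonneg hn0.le hx]
  have hneg : x < 0 →
      |(1 / (n : ℝ)) * ((n : ℝ) * x * Real.tanh (Real.log (1 + E)))| ≤ (-x) * E ∧
      (-x) * E ≤ 1 / (Real.exp 1 * n) := by
    intro hx
    constructor
    · rw [hsimp]
      have hTnn : 0 ≤ ((1 + E) ^ 2 - 1) / ((1 + E) ^ 2 + 1) := by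
        apply div_nonneg _ hD.le; nlinarith
      rw [abs_mul, abs_of_neg hx, abs_of_nonneg hTnn]
      apply mul_le_mul_of_nonneg_left _ (neg_pos.mpr hx).le
      rw [div_le_iff₀ hD]
      nlinarith [mul_pos hEpos hEpos, mul_pos (mul_pos hEpos hEpos) hEpos]
    · exact neg_mul_exp_le (n : ℝ) hn0 x hx
  refine ⟨?_, hpos, hneg⟩
  rcases le_or_gt 0 x with hx | hx
  · rw [max_eq_left hx]
    obtain ⟨h1, h2⟩ := hpos hx
    rw [h1]; exact h2
  · rw [max_eq_right hx.le, sub_zero]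
    obtain ⟨h1, h2⟩ := hneg hx
    refine h1.trans (h2.trans ?_)
    apply div_le_div_of_nonneg_left one_pos.le hn0
    calc (n : ℝ) = 1 * n := (one_mul _).symm
      _ ≤ Real.exp 1 * n := by
          apply mul_le_mul_of_nonneg_right _ hn0.le
          linarith [Real.add_one_le_exp (1:ℝ)]
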